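/- arXiv:2305.05655 — 6 statements merged into one kernel-verified Lean document; each statement's English description precedes it below -/
import Mathlib

section
/- If a category C has all small products, then its free coproduct completion ΣC has all small products, given by the distributive law ∏_{i∈I} ∑_{j∈J_i} c_{i,j} ≅ ∑_{j̄ ∈ ∏_{i∈I} J_i} ∏_{i∈I} c_{i, j̄(i)}. -/
open CategoryTheory Limits Opposite

universe v u

/-- The free product completion of a category. -/
structure FreeProd (C : Type u) [Category.{v} C] where
  ι : Type v
  obj : ι → C

instance FreeProd.category (C : Type u) [Category.{v} C] : Category.{v} (FreeProd C) where
  Hom X Y := Σ f : Y.ι → X.ι, ∀ j, X.obj (f j) ⟶ Y.obj j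
  id X := ⟨fun i => i, fun _ => 𝟙 _⟩
  comp {X Y Z} F G := ⟨fun k => F.1 (G.1 k), fun k => F.2 (G.1 k) ≫ G.2 k⟩
  id_comp F := by obtain ⟨f, g⟩ := F; dsimp; congr 1 <;> simp
  comp_id F := by obtain ⟨f, g⟩ := F; dsimp; congr 1 <;> simp
  assoc F G H := by dsimp; congr 1 <;> simp

/-- The free coproduct completion of a category. -/
structure FreeCoprod (C : Type u) [Category.{v} C] where
  ι : Type v
  obj : ι → C

instance FreeCoprod.category (C : Type u) [Category.{v} C] : Category.{v} (FreeCoprod C) where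
  Hom X Y := Σ f : X.ι → Y.ι, ∀ i, X.obj i ⟶ Y.obj (f i)
  id X := ⟨fun i => i, fun _ => 𝟙 _⟩
  comp {X Y Z} F G := ⟨fun i => G.1 (F.1 i), fun i => F.2 i ≫ G.2 (F.1 i)⟩
  id_comp F := by obtain ⟨f, g⟩ := F; dsimp; congr 1 <;> simp
  comp_id F := by obtain ⟨f, g⟩ := F; dsimp; congr 1 <;> simp
  assoc F G H := by dsimp; congr 1 <;> simp

section Aux

variable {C : Type u} [Category.{v} C]

theorem FreeCoprod.hom_ext {X Y : FreeCoprod C} (F G : X ⟶ Y)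
    (h1 : ∀ i, F.1 i = G.1 i)
    (h2 : ∀ i, F.2 i ≫ eqToHom (by rw [h1 i]) = G.2 i) : F = G := by
  obtain ⟨f, f2⟩ := F
  obtain ⟨g, g2⟩ := G
  obtain rfl : f = g := funext h1
  simp only [eqToHom_refl, Category.comp_id] at h2
  exact congrArg (Sigma.mk f) (funext h2)

theorem FreeCoprod.hom_congr {X Y : FreeCoprod C} {F G : X ⟶ Y} (h : F = G) (i : X.ι) :
    F.2 i ≫ eqToHom (by rw [h]) = G.2 i := by
  subst h; simp

theorem eqToHom_comp_piπ {I : Type v} [HasProducts.{v} C] {f g : I → C} (h : f = g) (i : I) :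
    eqToHom (by rw [h]) ≫ Pi.π g i = Pi.π f i ≫ eqToHom (by rw [h]) := by
  subst h; simp

noncomputable def freeCoprod_fan_isLimit [HasProducts.{v} C] (I : Type v) (J : I → Type v)
    (c : ∀ i, J i → C) :
    IsLimit (Fan.mk (f := fun i => (⟨J i, c i⟩ : FreeCoprod C))
      (⟨∀ i, J i, fun jbar => ∏ᶜ fun i => c i (jbar i)⟩ : FreeCoprod C)
      (fun i => ⟨fun jbar => jbar i, fun jbar => Pi.π (fun i' => c i' (jbar i')) i⟩)) := by
  refine mkFanLimit _ (fun s => ⟨fun k i => (s.proj i).1 k,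
      fun k => Pi.lift (fun i => (s.proj i).2 k)⟩) ?_ ?_
  · intro s i
    refine FreeCoprod.hom_ext _ _ (fun k => rfl) (fun k => ?_)
    simp [FreeCoprod.category]
    exact Pi.lift_π _ _
  · intro s m hm
    have h1 : ∀ (k : s.pt.ι) (i : I), m.1 k i = (s.proj i).1 k := by
      intro k i
      exact congrFun (congrArg Sigma.fst (hm i)) k
    refine FreeCoprod.hom_ext _ _ (fun k => funext (h1 k)) (fun k => ?_)
    apply limit.hom_ext
    intro ⟨i⟩
    have h2 := FreeCoprod.hom_congr (hm i) k
    simp only [FreeCoprod.category, Fan.mk_pt, Fan.mk_π_app] at h2 ⊢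
    rw [Category.assoc, eqToHom_comp_piπ (funext fun i => congrArg (c i) (h1 k i)) i, limit.lift_π]
    simp only [Fan.mk_π_app]
    rw [← h2, ← Category.assoc]
    rfl

theorem freeCoprod_hasProducts [HasProducts.{v} C] : HasProducts.{v} (FreeCoprod C) := by
  intro I
  constructor
  intro F
  have : HasLimit (Discrete.functor (F.obj ∘ Discrete.mk)) :=
    HasLimit.mk ⟨_, freeCoprod_fan_isLimit I (fun i => (F.obj ⟨i⟩).ι) (fun i => (F.obj ⟨i⟩).obj)⟩
  exact hasLimit_of_iso (Discrete.natIsoFunctor (F := F)).symm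

end Aux

/-- if `C` has all small products, then `ΣC` has all small products, given by the
distributive law `∏_{i∈I} ∑_{j∈J_i} c_{i,j} ≅ ∑_{j̄∈∏_i J_i} ∏_i c_{i,j̄(i)}`: the formal sum
`∑_{j̄∈∏_i J_i} ∏_i c_{i,j̄(i)}`, equipped with the evident projections, is a categorical
product of the family `(∑_{j∈J_i} c_{i,j})_{i∈I}` in `ΣC`. -/

theorem freeCoprod_hasProducts_distributive (C : Type u) [Category.{v} C]
    [HasProducts.{v} C] (I : Type v) (J : I → Type v) (c : ∀ i, J i → C) :
    Nonempty (IsLimit (Fan.mk (f := fun i => (⟨J i, c i⟩ : FreeCoprod C))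
      (⟨∀ i, J i, fun jbar => ∏ᶜ fun i => c i (jbar i)⟩ : FreeCoprod C)
      (fun i => ⟨fun jbar => jbar i, fun jbar => Pi.π (fun i' => c i' (jbar i')) i⟩))) ∧
    HasProducts.{v} (FreeCoprod C) := by
  exact ⟨⟨freeCoprod_fan_isLimit I J c⟩, freeCoprod_hasProducts⟩
end

section
/- The category ΣΠ1 of polynomials in the terminal category 1 is equivalent to the category Poly of polynomial functors Set → Set (coproducts of representable functors) and natural transformations between them. -/
open CategoryTheory Limits Opposite

universe v u

/-- The category of polynomials in `C`: the free coproduct completion of the free product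
completion of `C`. -/
abbrev SigmaPi (C : Type u) [Category.{v} C] := FreeCoprod (FreeProd C)

/-- The polynomial `∑_{i∈I} ∏_{a∈A_i} c_{i,a}` as an object of `ΣΠC`. -/
def polyObj {C : Type u} [Category.{v} C] (I : Type v) (A : I → Type v)
    (c : ∀ i, A i → C) : SigmaPi C :=
  ⟨I, fun i => ⟨A i, c i⟩⟩

/-- A functor `Set ⥤ Set` is a polynomial functor if it is isomorphic to a coproduct of
representables `∑_{i∈I} Set(A_i, −)`. -/
def IsPolynomialFunctor (F : Type v ⥤ Type v) : Prop :=
  ∃ (I : Type v) (A : I → Type v), Nonempty (F ≅ ∐ fun i => coyoneda.obj (op (A i)))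


section Aux
open CategoryTheory Limits Opposite

/-- The polynomial functor `X ↦ Σ i, (A i → X)`. -/
def pFun (I : Type v) (A : I → Type v) : Type v ⥤ Type v where
  obj X := Σ i, (A i → X)
  map f := ↾fun p => ⟨p.1, fun a => f (p.2 a)⟩

noncomputable def pFunIso (I : Type v) (A : I → Type v) :
    pFun I A ≅ ∐ fun i => coyoneda.obj (op (A i)) where
  hom := { app := fun X => ↾fun (p : Σ i, (A i → X)) => (Sigma.ι (fun i => coyoneda.obj (op (A i))) p.1).app X (↾p.2)
           naturality := fun X Y f => by
             ext p
             exact ConcreteCategory.congr_hom ((Sigma.ι (fun i => coyoneda.obj (op (A i))) p.1).naturality f) (TypeCat.ofHom p.2 : A p.1 ⟶ X) }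
  inv := Sigma.desc fun i => { app := fun X => ↾fun (x : A i ⟶ X) => (⟨i, fun a => x a⟩ : Σ i, (A i → X)) }
  hom_inv_id := by
    ext X p
    obtain ⟨i, x⟩ : Σ i, (A i → X) := p
    have h := Sigma.ι_desc (f := fun i => coyoneda.obj (op (A i)))
      (p := fun i => ({ app := fun X => ↾fun (x : A i ⟶ X) => (⟨i, fun a => x a⟩ : Σ i, (A i → X)) } :
        coyoneda.obj (op (A i)) ⟶ pFun I A)) i
    have := ConcreteCategory.congr_hom (NatTrans.congr_app h X) (TypeCat.ofHom x : A i ⟶ X)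
    simp only [NatTrans.comp_app, types_comp_apply] at this ⊢
    exact this
  inv_hom_id := by
    apply colimit.hom_ext
    intro j
    ext X x
    simp
    rfl

lemma freeProdHom_ext {X Y : FreeProd (Discrete PUnit.{v+1})} {F G : X ⟶ Y}
    (h : F.1 = G.1) : F = G := by
  obtain ⟨a, b⟩ := F
  obtain ⟨c, d⟩ := G
  dsimp at h
  subst h
  congr 1
  funext j
  apply Subsingleton.elim

noncomputable def GFun : SigmaPi (Discrete PUnit.{v+1}) ⥤
    ObjectProperty.FullSubcategory (IsPolynomialFunctor.{v}) where
  obj P := ⟨pFun P.ι (fun i => (P.obj i).ι), ⟨P.ι, fun i => (P.obj i).ι, ⟨pFunIso _ _⟩⟩⟩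
  map {P Q} F :=
    { hom := { app := fun X => ↾fun p => ⟨F.1 p.1, fun b => p.2 ((F.2 p.1).1 b)⟩
               naturality := fun X Y f => by ext p; rfl } }
  map_id P := by apply InducedCategory.hom_ext; apply NatTrans.ext; funext X; ext p; rfl
  map_comp F G := by apply InducedCategory.hom_ext; apply NatTrans.ext; funext X; ext p; rfl

instance : GFun.{v}.Faithful where
  map_injective := by
    intro P Q F F' h
    obtain ⟨f, g⟩ := F
    obtain ⟨f', g'⟩ := F'
    have key : ∀ i, (⟨f i, fun b => (g i).1 b⟩ : Σ j, ((Q.obj j).ι → (P.obj i).ι))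
        = ⟨f' i, fun b => (g' i).1 b⟩ := fun i =>
      ConcreteCategory.congr_hom (NatTrans.congr_app (congrArg InducedCategory.Hom.hom h) ((P.obj i).ι)) ⟨i, id⟩
    have hf : f = f' := funext fun i => congrArg Sigma.fst (key i)
    subst hf
    congr 1
    funext i
    apply freeProdHom_ext
    exact eq_of_heq (Sigma.ext_iff.mp (key i)).2

instance : GFun.{v}.Full where
  map_surjective := by
    intro P Q η
    refine ⟨⟨fun i => (η.hom.app _ ⟨i, id⟩).1,
      fun i => ⟨(η.hom.app _ ⟨i, id⟩).2,
        fun j => Discrete.eqToHom (Subsingleton.elim _ _)⟩⟩, ?_⟩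
    apply InducedCategory.hom_ext
    apply NatTrans.ext
    funext X
    ext p
    obtain ⟨i, x⟩ := p
    have nat := ConcreteCategory.congr_hom (η.hom.naturality (X := (P.obj i).ι) (Y := X) (↾x)) ⟨i, id⟩
    dsimp [GFun, pFun] at nat ⊢
    exact nat.symm

instance : GFun.{v}.EssSurj where
  mem_essImage := by
    rintro ⟨F, I, A, ⟨e⟩⟩
    refine ⟨⟨I, fun i => ⟨A i, fun _ => ⟨PUnit.unit⟩⟩⟩, ⟨?_⟩⟩
    exact (ObjectProperty.ι _).preimageIso ((pFunIso I A) ≪≫ e.symm)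

end Aux

/-- `Poly ≌ ΣΠ1`, where `1` is the terminal category: the category of polynomials
in the terminal category is equivalent to the full subcategory of `[Set, Set]` spanned by
polynomial functors (coproducts of representables). -/
theorem sigmaPi_terminal_equiv_poly :
    Nonempty (SigmaPi (Discrete PUnit.{v + 1}) ≌
      ObjectProperty.FullSubcategory (IsPolynomialFunctor.{v})) := by
  have : GFun.{v}.IsEquivalence := {}
  exact ⟨GFun.asEquivalence⟩
end

section
/- The full subcategory Hmg(2) of homogeneous polynomials in the walking arrow category 2 is equivalent to de Paiva's dialectica category Dial(Set): objects are triples (I, A, c) with c: I × A → {⊥, ⊤}, and morphisms (I, A, c) → (J, B, d) are pairs (φ: I → J, φ♯: I × B → A) such that c(i, φ♯(i,b)) = ⊤ implies d(φi, b) = ⊤ for all i ∈ I, b ∈ B. -/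
open CategoryTheory Limits Opposite

universe v u

/-- A polynomial in `C` is homogeneous if it can be written with a direction set independent
of the position. -/
def IsHomogeneous {C : Type u} [Category.{v} C] (X : SigmaPi C) : Prop :=
  ∃ (I : Type v) (A : Type v) (c : I → A → C), Nonempty (X ≅ polyObj I (fun _ => A) c)

/-- Objects of de Paiva's dialectica category `Dial(Set)`: triples `(I, A, c)` with
`c : I × A → {⊥, ⊤}` (we write the two-element poset `2` as `Bool` with `false = ⊥ ≤ ⊤ = true`). -/
structure DialObj : Type 1 where
  pos : Type
  dir : Type
  rel : pos → dir → Bool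

/-- Morphisms of `Dial(Set)`. -/
@[ext] structure DialHom (X Y : DialObj) where
  toFun : X.pos → Y.pos
  back : X.pos → Y.dir → X.dir
  cond : ∀ i b, X.rel i (back i b) = true → Y.rel (toFun i) b = true

instance : Category DialObj where
  Hom := DialHom
  id X := ⟨fun i => i, fun _ a => a, fun _ _ h => h⟩
  comp f g := ⟨fun i => g.toFun (f.toFun i), fun i b => f.back i (g.back (f.toFun i) b),
    fun i b h => g.cond _ _ (f.cond _ _ h)⟩

/-- The functor from `Dial(Set)` to `Hmg(2)`. -/
noncomputable def dialToHmg : DialObj ⥤ ObjectProperty.FullSubcategory (IsHomogeneous (C := Bool)) where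
  obj X := ⟨polyObj X.pos (fun _ => X.dir) X.rel,
    ⟨X.pos, X.dir, X.rel, ⟨Iso.refl _⟩⟩⟩
  map {X Y} f := ⟨f.toFun, fun i => ⟨fun b => f.back i b,
    fun b => homOfLE (Bool.le_iff_imp.mpr (f.cond i b))⟩⟩
  map_id X := rfl
  map_comp f g := rfl

theorem dialToHmg_essSurj : dialToHmg.EssSurj := by
  constructor
  intro X
  obtain ⟨I, A, c, ⟨e⟩⟩ := X.2
  exact ⟨⟨I, A, c⟩, ⟨ObjectProperty.isoMk _ e.symm⟩⟩

def dialToHmg_ff : dialToHmg.FullyFaithful where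
  preimage {X Y} f := ⟨f.hom.1, fun i b => (f.hom.2 i).1 b,
    fun i b h => Bool.le_iff_imp.mp (leOfHom ((f.hom.2 i).2 b)) h⟩
  map_preimage {X Y} f := by
    obtain ⟨⟨f1, f2⟩⟩ := f
    dsimp [dialToHmg]
    congr 1
  preimage_map f := rfl

/-- the full subcategory `Hmg(2)` of homogeneous polynomials in the walking
arrow category `2` (here the poset `Bool`) is equivalent to the dialectica category
`Dial(Set)`. -/
theorem hmg_two_equiv_dial :
    Nonempty (ObjectProperty.FullSubcategory (IsHomogeneous (C := Bool)) ≌ DialObj) := by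
  have := dialToHmg_essSurj
  have := dialToHmg_ff.full
  have := dialToHmg_ff.faithful
  have : dialToHmg.IsEquivalence := {}
  exact ⟨dialToHmg.asEquivalence.symm⟩
end

section
/- Given a monoidal category (C, e, ·), there is a monoidal structure (the parallel product ⊗) on ΣΠC with unit e given by (∑_{i∈I} ∏_{a∈A_i} c_{i,a}) ⊗ (∑_{j∈J} ∏_{b∈B_j} d_{j,b}) ≅ ∑_{(i,j)∈I×J} ∏_{(a,b)∈A_i×B_j} (c_{i,a} · d_{j,b}). -/
open CategoryTheory Limits Opposite MonoidalCategory

universe v u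

namespace SigmaPiMonoidal

section
variable {D : Type u} [Category.{v} D]

@[simp] theorem FreeProd_id_fst (X : FreeProd D) (a : X.ι) :
    (𝟙 X : X ⟶ X).1 a = a := rfl

@[simp] theorem FreeProd_id_snd (X : FreeProd D) (a : X.ι) :
    (𝟙 X : X ⟶ X).2 a = 𝟙 (X.obj a) := rfl

@[simp] theorem FreeProd_comp_fst {X Y Z : FreeProd D} (F : X ⟶ Y) (G : Y ⟶ Z) (k : Z.ι) :
    (F ≫ G).1 k = F.1 (G.1 k) := rfl

@[simp] theorem FreeProd_comp_snd {X Y Z : FreeProd D} (F : X ⟶ Y) (G : Y ⟶ Z) (k : Z.ι) :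
    (F ≫ G).2 k = F.2 (G.1 k) ≫ G.2 k := rfl

@[simp] theorem FreeCoprod_id_fst (X : FreeCoprod D) (i : X.ι) :
    (𝟙 X : X ⟶ X).1 i = i := rfl

@[simp] theorem FreeCoprod_id_snd (X : FreeCoprod D) (i : X.ι) :
    (𝟙 X : X ⟶ X).2 i = 𝟙 (X.obj i) := rfl

@[simp] theorem FreeCoprod_comp_fst {X Y Z : FreeCoprod D} (F : X ⟶ Y) (G : Y ⟶ Z) (i : X.ι) :
    (F ≫ G).1 i = G.1 (F.1 i) := rfl

@[simp] theorem FreeCoprod_comp_snd {X Y Z : FreeCoprod D} (F : X ⟶ Y) (G : Y ⟶ Z) (i : X.ι) :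
    (F ≫ G).2 i = F.2 i ≫ G.2 (F.1 i) := rfl

end

variable {C : Type u} [Category.{v} C] [MonoidalCategory C]

/-- The parallel product on objects of `ΣΠC`. -/
def tObj (X Y : SigmaPi C) : SigmaPi C :=
  ⟨X.ι × Y.ι, fun p => ⟨(X.obj p.1).ι × (Y.obj p.2).ι,
    fun q => (X.obj p.1).obj q.1 ⊗ (Y.obj p.2).obj q.2⟩⟩

/-- The parallel product on morphisms of `ΣΠC`. -/
def tHom {X X' Y Y' : SigmaPi C} (F : X ⟶ X') (G : Y ⟶ Y') : tObj X Y ⟶ tObj X' Y' :=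
  ⟨fun p => (F.1 p.1, G.1 p.2), fun p =>
    ⟨fun q => ((F.2 p.1).1 q.1, (G.2 p.2).1 q.2),
     fun q => (F.2 p.1).2 q.1 ⊗ₘ (G.2 p.2).2 q.2⟩⟩

@[simp] theorem tHom_fst {X X' Y Y' : SigmaPi C} (F : X ⟶ X') (G : Y ⟶ Y')
    (p : (tObj X Y).ι) : (tHom F G).1 p = (F.1 p.1, G.1 p.2) := rfl

@[simp] theorem tHom_snd_fst {X X' Y Y' : SigmaPi C} (F : X ⟶ X') (G : Y ⟶ Y')
    (p : (tObj X Y).ι) (q : ((tObj X' Y').obj ((tHom F G).1 p)).ι) :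
    ((tHom F G).2 p).1 q = ((F.2 p.1).1 q.1, (G.2 p.2).1 q.2) := rfl

@[simp] theorem tHom_snd_snd {X X' Y Y' : SigmaPi C} (F : X ⟶ X') (G : Y ⟶ Y')
    (p : (tObj X Y).ι) (q : ((tObj X' Y').obj ((tHom F G).1 p)).ι) :
    ((tHom F G).2 p).2 q = (F.2 p.1).2 q.1 ⊗ₘ (G.2 p.2).2 q.2 := rfl

theorem tHom_id_aux_marker : True := trivial

/-- Extensionality for morphisms of `ΣΠC` whose index data agree definitionally. -/
theorem ext2 {X Y : SigmaPi C} {f : X.ι → Y.ι}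
    {g : ∀ i, (Y.obj (f i)).ι → (X.obj i).ι}
    {F G : ∀ i a, (X.obj i).obj (g i a) ⟶ (Y.obj (f i)).obj a}
    (h : ∀ i a, F i a = G i a) :
    (⟨f, fun i => ⟨g i, F i⟩⟩ : X ⟶ Y) = ⟨f, fun i => ⟨g i, G i⟩⟩ :=
  congrArg _ (funext fun i => congrArg _ (funext (h i)))

/-- The unit of the parallel product. -/
def unitObj : SigmaPi C := ⟨PUnit, fun _ => ⟨PUnit, fun _ => 𝟙_ C⟩⟩

/-- The associator for the parallel product. -/
def assoc (X Y Z : SigmaPi C) : tObj (tObj X Y) Z ≅ tObj X (tObj Y Z) where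
  hom := ⟨fun p => (p.1.1, (p.1.2, p.2)), fun p =>
    ⟨fun q => ((q.1, q.2.1), q.2.2), fun q => (α_ _ _ _).hom⟩⟩
  inv := ⟨fun p => ((p.1, p.2.1), p.2.2), fun p =>
    ⟨fun q => (q.1.1, (q.1.2, q.2)), fun q => (α_ _ _ _).inv⟩⟩
  hom_inv_id := ext2 (X := tObj (tObj X Y) Z) (Y := tObj (tObj X Y) Z)
    fun i a => by simp; exact Iso.hom_inv_id _
  inv_hom_id := ext2 (X := tObj X (tObj Y Z)) (Y := tObj X (tObj Y Z))
    fun i a => by simp; exact Iso.inv_hom_id _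

@[simp] theorem assoc_hom_fst (X Y Z : SigmaPi C) (p : (tObj (tObj X Y) Z).ι) :
    (assoc X Y Z).hom.1 p = (p.1.1, (p.1.2, p.2)) := rfl

@[simp] theorem assoc_hom_snd_fst (X Y Z : SigmaPi C) (p : (tObj (tObj X Y) Z).ι)
    (q : ((X.obj p.1.1).ι × (Y.obj p.1.2).ι × (Z.obj p.2).ι)) :
    ((assoc X Y Z).hom.2 p).1 q = ((q.1, q.2.1), q.2.2) := rfl

@[simp] theorem assoc_hom_snd_snd (X Y Z : SigmaPi C) (p : (tObj (tObj X Y) Z).ι)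
    (q : ((X.obj p.1.1).ι × (Y.obj p.1.2).ι × (Z.obj p.2).ι)) :
    ((assoc X Y Z).hom.2 p).2 q =
      (α_ ((X.obj p.1.1).obj q.1) ((Y.obj p.1.2).obj q.2.1) ((Z.obj p.2).obj q.2.2)).hom := rfl

/-- The left unitor for the parallel product. -/
def lUnit (X : SigmaPi C) : tObj unitObj X ≅ X where
  hom := ⟨fun p => p.2, fun p => ⟨fun a => (PUnit.unit, a), fun a => (λ_ _).hom⟩⟩
  inv := ⟨fun i => (PUnit.unit, i), fun i => ⟨fun q => q.2, fun q => (λ_ _).inv⟩⟩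
  hom_inv_id := ext2 (X := tObj unitObj X) (Y := tObj unitObj X) fun i a => by simp; exact Iso.hom_inv_id _
  inv_hom_id := ext2 (X := X) (Y := X) fun i a => by simp; exact Iso.inv_hom_id _

@[simp] theorem lUnit_hom_fst (X : SigmaPi C) (p : (tObj unitObj X).ι) :
    (lUnit X).hom.1 p = p.2 := rfl

@[simp] theorem lUnit_hom_snd_fst (X : SigmaPi C) (p : (tObj unitObj X).ι)
    (a : (X.obj p.2).ι) : ((lUnit X).hom.2 p).1 a = (PUnit.unit, a) := rfl

@[simp] theorem lUnit_hom_snd_snd (X : SigmaPi C) (p : (tObj unitObj X).ι)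
    (a : (X.obj p.2).ι) : ((lUnit X).hom.2 p).2 a = (λ_ ((X.obj p.2).obj a)).hom := rfl

/-- The right unitor for the parallel product. -/
def rUnit (X : SigmaPi C) : tObj X unitObj ≅ X where
  hom := ⟨fun p => p.1, fun p => ⟨fun a => (a, PUnit.unit), fun a => (ρ_ _).hom⟩⟩
  inv := ⟨fun i => (i, PUnit.unit), fun i => ⟨fun q => q.1, fun q => (ρ_ _).inv⟩⟩
  hom_inv_id := ext2 (X := tObj X unitObj) (Y := tObj X unitObj) fun i a => by simp; exact Iso.hom_inv_id _
  inv_hom_id := ext2 (X := X) (Y := X) fun i a => by simp; exact Iso.inv_hom_id _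

@[simp] theorem rUnit_hom_fst (X : SigmaPi C) (p : (tObj X unitObj).ι) :
    (rUnit X).hom.1 p = p.1 := rfl

@[simp] theorem rUnit_hom_snd_fst (X : SigmaPi C) (p : (tObj X unitObj).ι)
    (a : (X.obj p.1).ι) : ((rUnit X).hom.2 p).1 a = (a, PUnit.unit) := rfl

@[simp] theorem rUnit_hom_snd_snd (X : SigmaPi C) (p : (tObj X unitObj).ι)
    (a : (X.obj p.1).ι) : ((rUnit X).hom.2 p).2 a = (ρ_ ((X.obj p.1).obj a)).hom := rfl

theorem tHom_id (X Y : SigmaPi C) : tHom (𝟙 X) (𝟙 Y) = 𝟙 (tObj X Y) :=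
  ext2 (X := tObj X Y) (Y := tObj X Y) fun i a => by simp; rfl

set_option maxHeartbeats 1000000 in
/-- The parallel-product monoidal structure on `ΣΠC`. -/
def M : MonoidalCategory (SigmaPi C) where
  tensorObj := tObj
  whiskerLeft X _ _ f := tHom (𝟙 X) f
  whiskerRight f Y := tHom f (𝟙 Y)
  tensorHom := tHom
  tensorUnit := unitObj
  associator := assoc
  leftUnitor := lUnit
  rightUnitor := rUnit
  tensorHom_def {X₁ Y₁ X₂ Y₂} f g := ext2 (X := tObj X₁ X₂) (Y := tObj Y₁ Y₂) fun i a => by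
    dsimp only [tHom, assoc, lUnit, rUnit, tObj, unitObj, FreeCoprod_comp_snd, FreeCoprod_comp_fst,
      FreeCoprod_id_snd, FreeCoprod_id_fst, FreeProd_id_snd, FreeProd_id_fst];
    (try simp [MonoidalCategory.tensorHom_comp_tensorHom]);
    (try exact MonoidalCategory.tensorHom_def _ _); (try rfl)
  id_tensorHom_id X Y := tHom_id X Y
  tensorHom_comp_tensorHom {X₁ Y₁ Z₁ X₂ Y₂ Z₂} f₁ f₂ g₁ g₂ :=
    ext2 (X := tObj X₁ X₂) (Y := tObj Z₁ Z₂) fun i a => by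
    dsimp only [tHom, assoc, lUnit, rUnit, tObj, unitObj, FreeCoprod_comp_snd, FreeCoprod_comp_fst,
      FreeCoprod_id_snd, FreeCoprod_id_fst, FreeProd_id_snd, FreeProd_id_fst];
    (try simp [MonoidalCategory.tensorHom_comp_tensorHom]); (try rfl)
  whiskerLeft_id X Y := tHom_id X Y
  id_whiskerRight X Y := tHom_id X Y
  associator_naturality {X₁ X₂ X₃ Y₁ Y₂ Y₃} f₁ f₂ f₃ :=
    ext2 (X := tObj (tObj X₁ X₂) X₃) (Y := tObj Y₁ (tObj Y₂ Y₃)) fun i a => by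
    dsimp only [tHom, assoc, lUnit, rUnit, tObj, unitObj, FreeCoprod_comp_snd, FreeCoprod_comp_fst,
      FreeCoprod_id_snd, FreeCoprod_id_fst, FreeProd_id_snd, FreeProd_id_fst];
    (try simp [MonoidalCategory.associator_naturality]); (try rfl)
  leftUnitor_naturality {X Y} f := ext2 (X := tObj unitObj X) (Y := Y) fun i a => by
    dsimp only [tHom, assoc, lUnit, rUnit, tObj, unitObj, FreeCoprod_comp_snd, FreeCoprod_comp_fst,
      FreeCoprod_id_snd, FreeCoprod_id_fst, FreeProd_id_snd, FreeProd_id_fst];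
    (try simp [MonoidalCategory.id_tensorHom]);
    (try exact MonoidalCategory.leftUnitor_naturality _); (try rfl)
  rightUnitor_naturality {X Y} f := ext2 (X := tObj X unitObj) (Y := Y) fun i a => by
    dsimp only [tHom, assoc, lUnit, rUnit, tObj, unitObj, FreeCoprod_comp_snd, FreeCoprod_comp_fst,
      FreeCoprod_id_snd, FreeCoprod_id_fst, FreeProd_id_snd, FreeProd_id_fst];
    (try simp [MonoidalCategory.tensorHom_id]);
    (try exact MonoidalCategory.rightUnitor_naturality _); (try rfl)
  pentagon W X Y Z :=
    ext2 (X := tObj (tObj (tObj W X) Y) Z) (Y := tObj W (tObj X (tObj Y Z))) fun i a => by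
    dsimp only [tHom, assoc, lUnit, rUnit, tObj, unitObj, FreeCoprod_comp_snd, FreeCoprod_comp_fst,
      FreeCoprod_id_snd, FreeCoprod_id_fst, FreeProd_id_snd, FreeProd_id_fst, FreeProd_comp_fst, FreeProd_comp_snd];
    (try simp [MonoidalCategory.tensorHom_id, MonoidalCategory.id_tensorHom]);
    (try exact MonoidalCategory.pentagon _ _ _ _); (try rfl)
    refine Eq.trans ?_ (MonoidalCategory.pentagon _ _ _ _)
    rw [← MonoidalCategory.id_tensorHom]; rfl
  triangle X Y := ext2 (X := tObj (tObj X unitObj) Y) (Y := tObj X Y) fun i a => by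
    dsimp only [tHom, assoc, lUnit, rUnit, tObj, unitObj, FreeCoprod_comp_snd, FreeCoprod_comp_fst,
      FreeCoprod_id_snd, FreeCoprod_id_fst, FreeProd_id_snd, FreeProd_id_fst];
    (try simp [MonoidalCategory.tensorHom_id, MonoidalCategory.id_tensorHom]);
    (try exact MonoidalCategory.triangle _ _); (try rfl)

end SigmaPiMonoidal

/-- for a monoidal category `(C, e, ·)`, there is a monoidal structure
(the parallel product `⊗`) on `ΣΠC` with unit `e` given by
`(∑_i ∏_a c_{i,a}) ⊗ (∑_j ∏_b d_{j,b}) ≅ ∑_{(i,j)∈I×J} ∏_{(a,b)∈A_i×B_j} (c_{i,a} · d_{j,b})`. -/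
theorem sigmaPi_parallel_monoidal (C : Type u) [Category.{v} C] [MonoidalCategory C] :
    ∃ M : MonoidalCategory (SigmaPi C),
      Nonempty (M.tensorUnit ≅ polyObj PUnit (fun _ => PUnit) (fun _ _ => 𝟙_ C)) ∧
      (∀ (I : Type v) (A : I → Type v) (c : ∀ i, A i → C)
          (J : Type v) (B : J → Type v) (d : ∀ j, B j → C),
        Nonempty (M.tensorObj (polyObj I A c) (polyObj J B d) ≅
          polyObj (I × J) (fun p => A p.1 × B p.2)
            (fun p q => c p.1 q.1 ⊗ d p.2 q.2))) := by
  refine ⟨SigmaPiMonoidal.M, ⟨Iso.refl _⟩, fun I A c J B d => ⟨Iso.refl _⟩⟩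
end

section
/- For a monoidal category (C, e, ·), the composition product ◁ on ΣΠC, given on objects by (∑_{i∈I} ∏_{a∈A_i} u_{i,a}) ◁ (∑_{j∈J} ∏_{b∈B_j} v_{j,b}) = ∑_{i∈I} ∑_{j̄: A_i → J} ∏_{a∈A_i} ∏_{b∈B_{j̄(a)}} (u_{i,a} · v_{j̄(a),b}), extends to a monoidal structure (ΣΠC, e, ◁) with unit e (the one-position, one-direction polynomial with predicate e). -/
open CategoryTheory Limits Opposite MonoidalCategory

universe v u

/-- The composition product of two objects of `ΣΠC`, in distributed form:
`(∑_i ∏_a u_{i,a}) ◁ (∑_j ∏_b v_{j,b}) = ∑_{i∈I} ∑_{j̄ : A_i → J} ∏_{a∈A_i} ∏_{b∈B_{j̄ a}}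
(u_{i,a} · v_{j̄ a,b})`. -/
def compObj {C : Type u} [Category.{v} C] [MonoidalCategory C] (X Y : SigmaPi C) :
    SigmaPi C :=
  polyObj (Σ i : X.ι, ((X.obj i).ι → Y.ι))
    (fun p => Σ a : (X.obj p.1).ι, (Y.obj (p.2 a)).ι)
    (fun p q => (X.obj p.1).obj q.1 ⊗ (Y.obj (p.2 q.1)).obj q.2)

section Aux

variable {C : Type u} [Category.{v} C] [MonoidalCategory C]

/-- Extensionality for morphisms in `SigmaPi C`. -/
theorem SigmaPiHom.ext {X Y : SigmaPi C} {F G : X ⟶ Y} (h1 : F.1 = G.1)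
    (h2 : HEq F.2 G.2) : F = G := by
  obtain ⟨f, f'⟩ := F; obtain ⟨g, g'⟩ := G
  dsimp at h1; subst h1; cases h2; rfl

/-- Extensionality for morphisms in `FreeProd C`. -/
theorem FreeProdHom.ext {X Y : FreeProd C} {F G : X ⟶ Y} (h1 : F.1 = G.1)
    (h2 : HEq F.2 G.2) : F = G := by
  obtain ⟨f, f'⟩ := F; obtain ⟨g, g'⟩ := G
  dsimp at h1; subst h1; cases h2; rfl

/-- The composition product on morphisms. -/
def compHom {X X' Y Y' : SigmaPi C} (φ : X ⟶ X') (ψ : Y ⟶ Y') :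
    compObj X Y ⟶ compObj X' Y' :=
  ⟨fun p => ⟨φ.1 p.1, fun a' => ψ.1 (p.2 ((φ.2 p.1).1 a'))⟩,
   fun p => ⟨fun q => ⟨(φ.2 p.1).1 q.1, (ψ.2 (p.2 ((φ.2 p.1).1 q.1))).1 q.2⟩,
     fun q => (φ.2 p.1).2 q.1 ⊗ₘ (ψ.2 (p.2 ((φ.2 p.1).1 q.1))).2 q.2⟩⟩

/-- The unit object. -/
def unitObj (C : Type u) [Category.{v} C] [MonoidalCategory C] : SigmaPi C :=
  polyObj PUnit (fun _ => PUnit) (fun _ _ => 𝟙_ C)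

/-- The associator. -/
def compAssoc (X Y Z : SigmaPi C) :
    compObj (compObj X Y) Z ≅ compObj X (compObj Y Z) where
  hom := ⟨fun P => ⟨P.1.1, fun a => ⟨P.1.2 a, fun b => P.2 ⟨a, b⟩⟩⟩,
    fun P => ⟨fun q => ⟨⟨q.1, q.2.1⟩, q.2.2⟩,
      fun q => (α_ _ _ _).hom⟩⟩
  inv := ⟨fun P => ⟨⟨P.1, fun a => (P.2 a).1⟩, fun q => (P.2 q.1).2 q.2⟩,
    fun P => ⟨fun q => ⟨q.1.1, q.1.2, q.2⟩,
      fun q => (α_ _ _ _).inv⟩⟩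
  hom_inv_id := by
    refine SigmaPiHom.ext (by rfl) ?_
    apply heq_of_eq; funext p
    refine FreeProdHom.ext (by rfl) ?_
    apply heq_of_eq; funext q
    simp [CategoryStruct.id, CategoryStruct.comp]
    try exact rfl
    exact Iso.hom_inv_id _
  inv_hom_id := by
    refine SigmaPiHom.ext (by rfl) ?_
    apply heq_of_eq; funext p
    refine FreeProdHom.ext (by rfl) ?_
    apply heq_of_eq; funext q
    simp [CategoryStruct.id, CategoryStruct.comp]
    try exact rfl
    exact Iso.inv_hom_id _

/-- The left unitor. -/
def compLeftUnitor (X : SigmaPi C) : compObj (unitObj C) X ≅ X where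
  hom := ⟨fun p => p.2 PUnit.unit,
    fun p => ⟨fun b => ⟨PUnit.unit, b⟩, fun b => (λ_ _).hom⟩⟩
  inv := ⟨fun i => ⟨PUnit.unit, fun _ => i⟩,
    fun i => ⟨fun q => q.2, fun q => (λ_ _).inv⟩⟩
  hom_inv_id := by
    refine SigmaPiHom.ext (by rfl) ?_
    apply heq_of_eq; funext p
    refine FreeProdHom.ext (by rfl) ?_
    apply heq_of_eq; funext q
    simp [CategoryStruct.id, CategoryStruct.comp]
    try exact rfl
    exact Iso.hom_inv_id _
  inv_hom_id := by
    refine SigmaPiHom.ext (by rfl) ?_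
    apply heq_of_eq; funext p
    refine FreeProdHom.ext (by rfl) ?_
    apply heq_of_eq; funext q
    simp [CategoryStruct.id, CategoryStruct.comp]
    try exact rfl
    exact Iso.inv_hom_id _

/-- The right unitor. -/
def compRightUnitor (X : SigmaPi C) : compObj X (unitObj C) ≅ X where
  hom := ⟨fun p => p.1,
    fun p => ⟨fun a => ⟨a, PUnit.unit⟩, fun a => (ρ_ _).hom⟩⟩
  inv := ⟨fun i => ⟨i, fun _ => PUnit.unit⟩,
    fun i => ⟨fun q => q.1, fun q => (ρ_ _).inv⟩⟩
  hom_inv_id := by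
    refine SigmaPiHom.ext (by rfl) ?_
    apply heq_of_eq; funext p
    refine FreeProdHom.ext (by rfl) ?_
    apply heq_of_eq; funext q
    simp [CategoryStruct.id, CategoryStruct.comp]
    try exact rfl
    exact Iso.hom_inv_id _
  inv_hom_id := by
    refine SigmaPiHom.ext (by rfl) ?_
    apply heq_of_eq; funext p
    refine FreeProdHom.ext (by rfl) ?_
    apply heq_of_eq; funext q
    simp [CategoryStruct.id, CategoryStruct.comp]
    try exact rfl
    exact Iso.inv_hom_id _

instance sigmaPiMonoidalStruct : MonoidalCategoryStruct (SigmaPi C) where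
  tensorObj := compObj
  tensorHom := compHom
  whiskerLeft X _ _ f := compHom (𝟙 X) f
  whiskerRight f Y := compHom f (𝟙 Y)
  tensorUnit := unitObj C
  associator := compAssoc
  leftUnitor := compLeftUnitor
  rightUnitor := compRightUnitor

set_option maxHeartbeats 1000000 in
def sigmaPiMonoidal : MonoidalCategory (SigmaPi C) :=
  MonoidalCategory.ofTensorHom
    (id_tensorHom_id := by
      intro X Y
      refine SigmaPiHom.ext (by rfl) ?_
      apply heq_of_eq; funext p
      refine FreeProdHom.ext (by rfl) ?_
      apply heq_of_eq; funext q
      try simp [sigmaPiMonoidalStruct, compHom, compAssoc, compLeftUnitor,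
        compRightUnitor, unitObj, compObj, polyObj, CategoryStruct.id,
        CategoryStruct.comp, MonoidalCategory.pentagon, MonoidalCategoryStruct.tensorHom,
        MonoidalCategoryStruct.associator, MonoidalCategoryStruct.leftUnitor,
        MonoidalCategoryStruct.rightUnitor, MonoidalCategoryStruct.tensorObj,
        MonoidalCategoryStruct.tensorUnit]
      try exact rfl; rfl)
    (id_tensorHom := by intros; rfl)
    (tensorHom_id := by intros; rfl)
    (tensorHom_comp_tensorHom := by
      intro X₁ Y₁ Z₁ X₂ Y₂ Z₂ f₁ f₂ g₁ g₂
      refine SigmaPiHom.ext (by rfl) ?_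
      apply heq_of_eq; funext p
      refine FreeProdHom.ext (by rfl) ?_
      apply heq_of_eq; funext q
      try simp [sigmaPiMonoidalStruct, compHom, compAssoc, compLeftUnitor,
        compRightUnitor, unitObj, compObj, polyObj, CategoryStruct.id,
        CategoryStruct.comp, MonoidalCategory.pentagon, MonoidalCategoryStruct.tensorHom,
        MonoidalCategoryStruct.associator, MonoidalCategoryStruct.leftUnitor,
        MonoidalCategoryStruct.rightUnitor, MonoidalCategoryStruct.tensorObj,
        MonoidalCategoryStruct.tensorUnit]
      try exact rfl)
    (associator_naturality := by
      intro X₁ X₂ X₃ Y₁ Y₂ Y₃ f₁ f₂ f₃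
      refine SigmaPiHom.ext (by rfl) ?_
      apply heq_of_eq; funext p
      refine FreeProdHom.ext (by rfl) ?_
      apply heq_of_eq; funext q
      try simp [sigmaPiMonoidalStruct, compHom, compAssoc, compLeftUnitor,
        compRightUnitor, unitObj, compObj, polyObj, CategoryStruct.id,
        CategoryStruct.comp, MonoidalCategory.pentagon, MonoidalCategoryStruct.tensorHom,
        MonoidalCategoryStruct.associator, MonoidalCategoryStruct.leftUnitor,
        MonoidalCategoryStruct.rightUnitor, MonoidalCategoryStruct.tensorObj,
        MonoidalCategoryStruct.tensorUnit]
      try exact rfl)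
    (leftUnitor_naturality := by
      intro X Y f
      refine SigmaPiHom.ext (by rfl) ?_
      apply heq_of_eq; funext p
      refine FreeProdHom.ext (by rfl) ?_
      apply heq_of_eq; funext q
      try simp [sigmaPiMonoidalStruct, compHom, compAssoc, compLeftUnitor,
        compRightUnitor, unitObj, compObj, polyObj, CategoryStruct.id,
        CategoryStruct.comp, MonoidalCategory.pentagon, MonoidalCategoryStruct.tensorHom,
        MonoidalCategoryStruct.associator, MonoidalCategoryStruct.leftUnitor,
        MonoidalCategoryStruct.rightUnitor, MonoidalCategoryStruct.tensorObj,
        MonoidalCategoryStruct.tensorUnit]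
      try exact rfl)
    (rightUnitor_naturality := by
      intro X Y f
      refine SigmaPiHom.ext (by rfl) ?_
      apply heq_of_eq; funext p
      refine FreeProdHom.ext (by rfl) ?_
      apply heq_of_eq; funext q
      try simp [sigmaPiMonoidalStruct, compHom, compAssoc, compLeftUnitor,
        compRightUnitor, unitObj, compObj, polyObj, CategoryStruct.id,
        CategoryStruct.comp, MonoidalCategory.pentagon, MonoidalCategoryStruct.tensorHom,
        MonoidalCategoryStruct.associator, MonoidalCategoryStruct.leftUnitor,
        MonoidalCategoryStruct.rightUnitor, MonoidalCategoryStruct.tensorObj,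
        MonoidalCategoryStruct.tensorUnit]
      try exact rfl)
    (pentagon := by
      intro W X Y Z
      refine SigmaPiHom.ext (by rfl) ?_
      apply heq_of_eq; funext p
      refine FreeProdHom.ext (by rfl) ?_
      apply heq_of_eq; funext q
      try simp [sigmaPiMonoidalStruct, compHom, compAssoc, compLeftUnitor,
        compRightUnitor, unitObj, compObj, polyObj, CategoryStruct.id,
        CategoryStruct.comp, MonoidalCategory.pentagon, MonoidalCategoryStruct.tensorHom,
        MonoidalCategoryStruct.associator, MonoidalCategoryStruct.leftUnitor,
        MonoidalCategoryStruct.rightUnitor, MonoidalCategoryStruct.tensorObj,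
        MonoidalCategoryStruct.tensorUnit]
      try exact rfl)
    (triangle := by
      intro X Y
      refine SigmaPiHom.ext (by rfl) ?_
      apply heq_of_eq; funext p
      refine FreeProdHom.ext (by rfl) ?_
      apply heq_of_eq; funext q
      try simp [sigmaPiMonoidalStruct, compHom, compAssoc, compLeftUnitor,
        compRightUnitor, unitObj, compObj, polyObj, CategoryStruct.id,
        CategoryStruct.comp, MonoidalCategory.pentagon, MonoidalCategoryStruct.tensorHom,
        MonoidalCategoryStruct.associator, MonoidalCategoryStruct.leftUnitor,
        MonoidalCategoryStruct.rightUnitor, MonoidalCategoryStruct.tensorObj,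
        MonoidalCategoryStruct.tensorUnit]
      try exact rfl)

end Aux

/-- for a monoidal category `(C, e, ·)`, the composition product `◁` extends to
a monoidal structure on `ΣΠC` whose unit is the one-position, one-direction polynomial with
predicate `e`. -/
theorem sigmaPi_composition_monoidal (C : Type u) [Category.{v} C] [MonoidalCategory C] :
    ∃ M : MonoidalCategory (SigmaPi C),
      M.tensorUnit = polyObj PUnit (fun _ => PUnit) (fun _ _ => 𝟙_ C) ∧
      ∀ X Y : SigmaPi C, M.tensorObj X Y = compObj X Y := by
  exact ⟨sigmaPiMonoidal, rfl, fun _ _ => rfl⟩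
end

section
/- For a generalized Lawvere metric space X (a comonoid in (ΣΠ[0,∞]_≤, 0, ◁)), there is a natural bijection between discrete dynamical systems φ: X → ∞ (morphisms in ΣΠ[0,∞]_≤ to the one-position, one-direction polynomial with predicate ∞) and (Σ[0,∞]_≥, 0, ⊕)-enriched cofunctors Φ: X ⇸ B_∞, where B_∞ is the one-object enriched category with hom-set ℕ, addition as composition, and all weights ∞. -/
open CategoryTheory Limits Opposite MonoidalCategory ENNReal

universe v u

/-- The poset `[0, ∞]` of extended nonnegative reals, ordered by `≤` and viewed as a
category, is monoidal with unit `0` and tensor product `+`. -/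
noncomputable instance : MonoidalCategory ℝ≥0∞ where
  tensorObj a b := a + b
  whiskerLeft a _ _ f := homOfLE (add_le_add_right (leOfHom f) a)
  whiskerRight f b := homOfLE (add_le_add_left (leOfHom f) b)
  tensorHom f g := homOfLE (add_le_add (leOfHom f) (leOfHom g))
  tensorUnit := 0
  associator a b c := eqToIso (add_assoc a b c)
  leftUnitor a := eqToIso (zero_add a)
  rightUnitor a := eqToIso (add_zero a)
  tensorHom_def := by intros; exact Subsingleton.elim _ _
  id_tensorHom_id := by intros; exact Subsingleton.elim _ _
  tensorHom_comp_tensorHom := by intros; exact Subsingleton.elim _ _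
  whiskerLeft_id := by intros; exact Subsingleton.elim _ _
  id_whiskerRight := by intros; exact Subsingleton.elim _ _
  associator_naturality := by intros; exact Subsingleton.elim _ _
  leftUnitor_naturality := by intros; exact Subsingleton.elim _ _
  rightUnitor_naturality := by intros; exact Subsingleton.elim _ _
  pentagon := by intros; exact Subsingleton.elim _ _
  triangle := by intros; exact Subsingleton.elim _ _

/-- A small `(ΣCᵒᵖ, e, ⊙)`-enriched category, presented concretely: a set of objects,
morphisms with source and target, each morphism `f` carrying a weight `|f| ∈ C`; identity
morphisms with identity maps `η_x : |id_x| ⟶ e` in `C`; composition with composite maps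
`μ_{f,g} : |gf| ⟶ |f| ⊗ |g|` in `C`; satisfying unitality and associativity coherence. -/
structure WCat (C : Type u) [Category.{v} C] [MonoidalCategory C] :
    Type (max u (v + 1)) where
  Obj : Type v
  Mor : Type v
  src : Mor → Obj
  tgt : Mor → Obj
  wt : Mor → C
  ide : Obj → Mor
  ide_src : ∀ x, src (ide x) = x
  ide_tgt : ∀ x, tgt (ide x) = x
  cmp : ∀ (f g : Mor), tgt f = src g → Mor
  cmp_src : ∀ f g h, src (cmp f g h) = src f
  cmp_tgt : ∀ f g h, tgt (cmp f g h) = tgt g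
  η : ∀ x, wt (ide x) ⟶ 𝟙_ C
  μ : ∀ f g h, wt (cmp f g h) ⟶ wt f ⊗ wt g
  ide_cmp : ∀ f : Mor, cmp (ide (src f)) f (ide_tgt _) = f
  cmp_ide : ∀ f : Mor, cmp f (ide (tgt f)) ((ide_src _).symm) = f
  cmp_assoc : ∀ (f g h : Mor) (hfg : tgt f = src g) (hgh : tgt g = src h),
    cmp (cmp f g hfg) h (by rw [cmp_tgt]; exact hgh) =
      cmp f (cmp g h hgh) (by rw [cmp_src]; exact hfg)
  unit_left : ∀ f : Mor,
    μ (ide (src f)) f (ide_tgt _) ≫ (η (src f) ▷ wt f) ≫ (λ_ (wt f)).hom =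
      eqToHom (congrArg wt (ide_cmp f))
  unit_right : ∀ f : Mor,
    μ f (ide (tgt f)) ((ide_src _).symm) ≫ (wt f ◁ η (tgt f)) ≫ (ρ_ (wt f)).hom =
      eqToHom (congrArg wt (cmp_ide f))
  mu_assoc : ∀ (f g h : Mor) (hfg : tgt f = src g) (hgh : tgt g = src h),
    μ f (cmp g h hgh) (by rw [cmp_src]; exact hfg) ≫ (wt f ◁ μ g h hgh) =
      eqToHom (congrArg wt (cmp_assoc f g h hfg hgh)).symm ≫
        μ (cmp f g hfg) h (by rw [cmp_tgt]; exact hgh) ≫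
        (μ f g hfg ▷ wt h) ≫ (α_ (wt f) (wt g) (wt h)).hom

/-- A `(ΣCᵒᵖ, e, ⊙)`-enriched cofunctor between small enriched categories, presented
concretely: an object function, lifts of morphisms out of images, and weight maps
`|Φ♯_a f| ⟶ |f|` in `C`, preserving identities and composites compatibly with `η` and `μ`. -/
structure WCof {C : Type u} [Category.{v} C] [MonoidalCategory C] (A B : WCat C) :
    Type (max u v) where
  onObj : A.Obj → B.Obj
  lift : ∀ (a : A.Obj) (f : B.Mor), B.src f = onObj a → A.Mor
  lift_src : ∀ a f h, A.src (lift a f h) = a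
  lift_tgt : ∀ a f h, onObj (A.tgt (lift a f h)) = B.tgt f
  onW : ∀ a f h, A.wt (lift a f h) ⟶ B.wt f
  lift_ide : ∀ a : A.Obj, lift a (B.ide (onObj a)) (B.ide_src _) = A.ide a
  ide_coh : ∀ a : A.Obj,
    onW a (B.ide (onObj a)) (B.ide_src _) ≫ B.η (onObj a) =
      eqToHom (congrArg A.wt (lift_ide a)) ≫ A.η a
  lift_cmp : ∀ (a : A.Obj) (f g : B.Mor) (hf : B.src f = onObj a)
      (hfg : B.tgt f = B.src g),
    lift a (B.cmp f g hfg) (by rw [B.cmp_src]; exact hf) =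
      A.cmp (lift a f hf) (lift (A.tgt (lift a f hf)) g (by rw [lift_tgt]; exact hfg.symm))
        ((lift_src _ _ _).symm)
  cmp_coh : ∀ (a : A.Obj) (f g : B.Mor) (hf : B.src f = onObj a)
      (hfg : B.tgt f = B.src g),
    onW a (B.cmp f g hfg) (by rw [B.cmp_src]; exact hf) ≫ B.μ f g hfg =
      eqToHom (congrArg A.wt (lift_cmp a f g hf hfg)) ≫
        A.μ _ _ ((lift_src _ _ _).symm) ≫
        (onW a f hf ⊗ₘ onW (A.tgt (lift a f hf)) g (by rw [lift_tgt]; exact hfg.symm))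


/-- The one-object `(Σ[0,∞]_≥, 0, ⊕)`-enriched category with hom-set `ℕ`, addition as
composition, and weight `|n| = n · r`. -/
noncomputable def natWeighted (r : ℝ≥0∞) : WCat ℝ≥0∞ where
  Obj := PUnit
  Mor := ℕ
  src _ := PUnit.unit
  tgt _ := PUnit.unit
  wt n := (n : ℝ≥0∞) * r
  ide _ := 0
  ide_src _ := rfl
  ide_tgt _ := rfl
  cmp m n _ := m + n
  cmp_src _ _ _ := rfl
  cmp_tgt _ _ _ := rfl
  η _ := homOfLE (by simp)
  μ m n _ := homOfLE (le_of_eq (by show ((↑(m + n) : ℝ≥0∞)) * r = (↑m : ℝ≥0∞) * r + (↑n : ℝ≥0∞) * r; push_cast; ring))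
  ide_cmp f := Nat.zero_add f
  cmp_ide f := Nat.add_zero f
  cmp_assoc f g h _ _ := Nat.add_assoc f g h
  unit_left _ := Subsingleton.elim _ _
  unit_right _ := Subsingleton.elim _ _
  mu_assoc _ _ _ _ _ := Subsingleton.elim _ _

/-- A generalized Lawvere metric space `X` (a small `(Σ[0,∞]_≥, 0, ⊕)`-enriched category,
i.e. a comonoid in `(ΣΠ[0,∞]_≤, 0, ◁)`), viewed as its underlying polynomial in `[0,∞]_≤`:
positions are points, directions at `x` are the paths out of `x`, and predicates are costs. -/
noncomputable def polyOf (X : WCat ℝ≥0∞) : SigmaPi ℝ≥0∞ :=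
  polyObj X.Obj (fun x => {m : X.Mor // X.src m = x}) (fun _ m => X.wt m.1)

/-- The one-position, one-direction polynomial with predicate `∞`. -/
noncomputable def inftyObj : SigmaPi ℝ≥0∞ :=
  polyObj PUnit (fun _ => PUnit) (fun _ _ => (∞ : ℝ≥0∞))

section Aux

variable (X : WCat ℝ≥0∞)

lemma WCat.cmp_congr {f f' g g' : X.Mor} (hf : f = f') (hg : g = g')
    (h : X.tgt f = X.src g) (h' : X.tgt f' = X.src g') :
    X.cmp f g h = X.cmp f' g' h' := by subst hf; subst hg; rfl

lemma WCat.ide_cmp' (a : X.Obj) (f : X.Mor) (ha : X.src f = a)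
    (h : X.tgt (X.ide a) = X.src f) : X.cmp (X.ide a) f h = f := by
  subst ha; exact X.ide_cmp f

lemma WCat.cmp_ide' (a : X.Obj) (f : X.Mor) (ha : X.tgt f = a)
    (h : X.tgt f = X.src (X.ide a)) : X.cmp f (X.ide a) h = f := by
  subst ha; exact X.cmp_ide f

variable (s : ∀ x : X.Obj, X.Mor) (hs : ∀ x, X.src (s x) = x)

/-- Iterate the dynamical system `n` times out of `a`. -/
def iterD : ℕ → ∀ a : X.Obj, {m : X.Mor // X.src m = a}
  | 0, a => ⟨X.ide a, X.ide_src a⟩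
  | n + 1, a =>
    ⟨X.cmp (s a) (iterD n (X.tgt (s a))).1 (iterD n (X.tgt (s a))).2.symm,
      by rw [X.cmp_src]; exact hs a⟩

lemma iterD_congr (n : ℕ) {a a' : X.Obj} (h : a = a') :
    (iterD X s hs n a).1 = (iterD X s hs n a').1 := by subst h; rfl

lemma iterD_add : ∀ (m n : ℕ) (a : X.Obj),
    (iterD X s hs (m + n) a).1 =
      X.cmp (iterD X s hs m a).1
        (iterD X s hs n (X.tgt (iterD X s hs m a).1)).1
        ((iterD X s hs n (X.tgt (iterD X s hs m a).1)).2.symm)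
  | 0, n, a => by
    rw [Nat.zero_add]
    have h : X.tgt (X.ide a) = X.src (iterD X s hs n a).1 := by
      rw [X.ide_tgt, (iterD X s hs n a).2]
    refine ((X.ide_cmp' a _ (iterD X s hs n a).2 h).symm).trans ?_
    exact X.cmp_congr rfl (iterD_congr X s hs n (X.ide_tgt a).symm) h _
  | m + 1, n, a => by
    have h1 : m + 1 + n = (m + n) + 1 := Nat.succ_add m n
    rw [h1]
    show X.cmp (s a) (iterD X s hs (m + n) (X.tgt (s a))).1 _ = _
    set b := X.tgt (s a) with hb
    have hfg : X.tgt (s a) = X.src (iterD X s hs m b).1 := (iterD X s hs m b).2.symm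
    have hgh : X.tgt (iterD X s hs m b).1 =
        X.src (iterD X s hs n (X.tgt (iterD X s hs m b).1)).1 :=
      (iterD X s hs n _).2.symm
    have step1 := X.cmp_congr (f := s a) (g := (iterD X s hs (m + n) b).1) rfl
      (iterD_add m n b) ((iterD X s hs (m + n) b).2.symm)
      (by rw [X.cmp_src]; exact hfg)
    refine step1.trans ?_
    refine (X.cmp_assoc (s a) (iterD X s hs m b).1 _ hfg hgh).symm.trans ?_
    exact X.cmp_congr rfl (iterD_congr X s hs n (X.cmp_tgt _ _ _).symm) _
      ((iterD X s hs n _).2.symm)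

lemma wt_iterD_le (n : ℕ) (a : X.Obj) :
    X.wt (iterD X s hs n a).1 ≤ (n : ℝ≥0∞) * ∞ := by
  cases n with
  | zero =>
    have h0 : X.wt (X.ide a) ≤ 0 := leOfHom (X.η a)
    show X.wt (X.ide a) ≤ ((0 : ℕ) : ℝ≥0∞) * ∞
    simpa using h0
  | succ n =>
    have h1 : (((n + 1 : ℕ)) : ℝ≥0∞) * ∞ = ∞ := by
      rw [ENNReal.mul_top]
      exact_mod_cast Nat.succ_ne_zero n
    rw [h1]; exact le_top

/-- The cofunctor induced by a dynamical system. -/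
noncomputable def mkCof : WCof X (natWeighted ∞) where
  onObj _ := PUnit.unit
  lift a n _ := (iterD X s hs n a).1
  lift_src a n _ := (iterD X s hs n a).2
  lift_tgt _ _ _ := rfl
  onW a n _ := homOfLE (wt_iterD_le X s hs n a)
  lift_ide _ := rfl
  ide_coh _ := Subsingleton.elim _ _
  lift_cmp a f g _ _ := iterD_add X s hs f g a
  cmp_coh _ _ _ _ _ := Subsingleton.elim _ _

lemma wcof_ext {A B : WCat ℝ≥0∞} {F G : WCof A B} (h1 : F.onObj = G.onObj)
    (h2 : ∀ a f h h', F.lift a f h = G.lift a f h') : F = G := by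
  obtain ⟨o1, l1, ls1, lt1, w1, li1, ic1, lc1, cc1⟩ := F
  obtain ⟨o2, l2, ls2, lt2, w2, li2, ic2, lc2, cc2⟩ := G
  dsimp at h1 h2
  subst h1
  have hl : l1 = l2 := funext fun a => funext fun f => funext fun h => h2 a f h h
  subst hl
  have hw : w1 = w2 := funext fun a => funext fun f => funext fun h =>
    Subsingleton.elim _ _
  subst hw
  rfl

/-- Morphisms `polyOf X ⟶ inftyObj` are just sections of the source map. -/
noncomputable def homEquivSections :
    (polyOf X ⟶ inftyObj) ≃ (∀ x : X.Obj, {m : X.Mor // X.src m = x}) where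
  toFun φ x := (φ.2 x).1 PUnit.unit
  invFun t := ⟨fun _ => PUnit.unit, fun x => ⟨fun _ => t x, fun _ => homOfLE le_top⟩⟩
  left_inv φ := rfl
  right_inv t := rfl

/-- Sections of the source map are exactly cofunctors to `B_∞`. -/
noncomputable def sectionsEquivCof :
    (∀ x : X.Obj, {m : X.Mor // X.src m = x}) ≃ WCof X (natWeighted ∞) where
  toFun t := mkCof X (fun x => (t x).1) (fun x => (t x).2)
  invFun Φ x := ⟨Φ.lift x (1 : ℕ) rfl, Φ.lift_src x (1 : ℕ) rfl⟩
  left_inv t := funext fun x => Subtype.ext (X.cmp_ide _)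
  right_inv Φ := by
    refine wcof_ext (funext fun _ => rfl) ?_
    intro a f h h'
    induction f generalizing a with
    | zero =>
      exact (Φ.lift_ide a).symm
    | succ n ih =>
      show X.cmp (Φ.lift a (1 : ℕ) rfl) _ _ = _
      have hg := ih (X.tgt (Φ.lift a (1 : ℕ) rfl)) rfl rfl
      refine Eq.trans (X.cmp_congr rfl hg _ ((Φ.lift_src _ n rfl).symm)) ?_
      refine Eq.trans (Φ.lift_cmp a (1 : ℕ) n rfl rfl).symm ?_
      congr 1
      exact Nat.add_comm 1 n

end Aux

/-- for a generalized Lawvere metric space `X`, discrete dynamical systems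
`φ : X → ∞` (morphisms in `ΣΠ[0,∞]_≤` from the underlying polynomial of `X` to the
one-position, one-direction polynomial with predicate `∞`) are in natural bijection with
`(Σ[0,∞]_≥, 0, ⊕)`-enriched cofunctors `Φ : X ⇸ B_∞`, where `B_∞` is the one-object
enriched category with hom-set `ℕ`, addition as composition, and all weights infinite
(`|n| = n · ∞`). -/
theorem dds_equiv_enriched_cofunctors (X : WCat ℝ≥0∞) :
    Nonempty ((polyOf X ⟶ inftyObj) ≃ WCof X (natWeighted ∞)) :=
  ⟨(homEquivSections X).trans (sectionsEquivCof X)⟩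
end
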